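/- (Proposition 6.5, necessary and sufficient condition for Hamiltonization after the second reduction, Euclidean case Q̃ = ℝ^n.) Let B be a basic two-form and Ξ̃ a semibasic two-form on ℝ^n × ℝ^n, let H̃: ℝ^n × ℝ^n → ℝ be smooth, and let X̃ be a smooth vector field satisfying Ω(X̃(z), v) − B_z(X̃(z), v) − Ξ̃_z(X̃(z), v) = DH̃(z)[v] for all z and v. Let f: ℝ^n → ℝ be smooth and nowhere-vanishing and X̃_C the Chaplygin-rescaled vector field. Then X̃_C satisfies Hamilton's equations Ω(X̃_C(z), v) = DH̃_C(z)[v] for all z and v, with H̃_C := H̃ ∘ Ψ_{1/f}, if and only if the one-form i_{X̃_C}[df ∧ Θ − f²(B + Ψ_{1/f}^*Ξ̃)] vanishes identically, i.e. (df ∧ Θ)_z(X̃_C(z), v) − f(q)²·[B_z(X̃_C(z), v) + (Ψ_{1/f}^*Ξ̃)_z(X̃_C(z), v)] = 0 for all z = (q,p) and all v. -/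

import Mathlib

noncomputable section

open Matrix

/-- Configuration vectors: points of `ℝⁿ`. -/
abbrev Vec (n : ℕ) : Type := Fin n → ℝ

/-- Phase space `ℝⁿ × ℝⁿ`, points `z = (q, p)`. -/
abbrev Phase (n : ℕ) : Type := Vec n × Vec n

/-- Canonical symplectic form `Ω(u,v) = ⟨u_q, v_p⟩ − ⟨u_p, v_q⟩`. -/
def Omega {n : ℕ} (u v : Phase n) : ℝ := u.1 ⬝ᵥ v.2 - u.2 ⬝ᵥ v.1

/-- Liouville one-form `Θ_z(v) = ⟨p, v_q⟩` at `z = (q,p)`. -/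
def Theta {n : ℕ} (z v : Phase n) : ℝ := z.2 ⬝ᵥ v.1

/-- Fiber scaling `Ψ_f(q,p) = (q, f(q)·p)`. -/
def Psi {n : ℕ} (f : Vec n → ℝ) (z : Phase n) : Phase n := (z.1, f z.1 • z.2)

/-- `Ψ_{1/f}`, the inverse of `Ψ_f`. -/
def PsiInv {n : ℕ} (f : Vec n → ℝ) : Phase n → Phase n := Psi fun q => (f q)⁻¹

/-- The Chaplygin-rescaled vector field
`X_C(z) := DΨ_f(Ψ_{1/f}(z))[(1/f(q))·X(Ψ_{1/f}(z))]`. -/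
def ChapRescale {n : ℕ} (f : Vec n → ℝ) (X : Phase n → Phase n) (z : Phase n) : Phase n :=
  fderiv ℝ (Psi f) (PsiInv f z) ((f z.1)⁻¹ • X (PsiInv f z))

/-- The two-form `df ∧ Θ`. -/
def dfTheta {n : ℕ} (f : Vec n → ℝ) (z u v : Phase n) : ℝ :=
  fderiv ℝ f z.1 u.1 * (z.2 ⬝ᵥ v.1) - fderiv ℝ f z.1 v.1 * (z.2 ⬝ᵥ u.1)

/-- Divergence of a vector field: `div Y (z) = trace DY(z)`. -/
def divergence {n : ℕ} (Y : Phase n → Phase n) (z : Phase n) : ℝ :=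
  LinearMap.trace ℝ (Phase n) (fderiv ℝ Y z).toLinearMap

/-- A semibasic two-form on phase space: a smooth assignment `z ↦ Ξ_z` of
alternating bilinear forms whose value depends only on the base components
of its arguments. -/
structure SemibasicTwoForm (n : ℕ) where
  form : Phase n → Phase n → Phase n → ℝ
  smooth : ∀ u v : Phase n, ContDiff ℝ (⊤ : ℕ∞) fun z => form z u v
  alt : ∀ z u v : Phase n, form z u v = - form z v u
  add_left : ∀ (z u u' v : Phase n), form z (u + u') v = form z u v + form z u' v
  smul_left : ∀ (z : Phase n) (c : ℝ) (u v : Phase n), form z (c • u) v = c * form z u v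
  semibasic : ∀ (z u v u' v' : Phase n), u.1 = u'.1 → v.1 = v'.1 → form z u v = form z u' v'

/-- A basic two-form on phase space: a semibasic two-form whose value is moreover
independent of the point's fiber coordinate `p`. -/
structure BasicTwoForm (n : ℕ) extends SemibasicTwoForm n where
  basic : ∀ (q p p' : Vec n) (u v : Phase n), form (q, p) u v = form (q, p') u v

/-- Pullback of a two-form field by `Ψ_{1/f}`. -/
def pullTwoForm {n : ℕ} (f : Vec n → ℝ) (Ξ : Phase n → Phase n → Phase n → ℝ)
    (z u v : Phase n) : ℝ :=
  Ξ (PsiInv f z) (fderiv ℝ (PsiInv f) z u) (fderiv ℝ (PsiInv f) z v)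

/-- Derivative of the fiber scaling map. -/
lemma psi_hasFDerivAt {n : ℕ} {f : Vec n → ℝ} {f' : Vec n →L[ℝ] ℝ} {z : Phase n}
    (hf : HasFDerivAt f f' z.1) :
    HasFDerivAt (Psi f) ((ContinuousLinearMap.fst ℝ (Vec n) (Vec n)).prod
      (f z.1 • ContinuousLinearMap.snd ℝ (Vec n) (Vec n)
        + (f'.comp (ContinuousLinearMap.fst ℝ (Vec n) (Vec n))).smulRight z.2)) z := by
  have h1 : HasFDerivAt (fun w : Phase n => f w.1)
      (f'.comp (ContinuousLinearMap.fst ℝ (Vec n) (Vec n))) z := hf.comp z (hasFDerivAt_fst)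
  exact HasFDerivAt.prodMk (hasFDerivAt_fst) (h1.smul (hasFDerivAt_snd))

lemma psi_fderiv_apply {n : ℕ} {f : Vec n → ℝ} {f' : Vec n →L[ℝ] ℝ} {z : Phase n}
    (hf : HasFDerivAt f f' z.1) (v : Phase n) :
    fderiv ℝ (Psi f) z v = (v.1, f z.1 • v.2 + f' v.1 • z.2) := by
  rw [(psi_hasFDerivAt hf).fderiv]
  simp

theorem statement8 (n : ℕ) (hn : 1 ≤ n) (B : BasicTwoForm n) (Ξt : SemibasicTwoForm n)
    (Ht : Phase n → ℝ) (Xt : Phase n → Phase n) (f : Vec n → ℝ)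
    (hHt : ContDiff ℝ (⊤ : ℕ∞) Ht) (hXt : ContDiff ℝ (⊤ : ℕ∞) Xt)
    (hf : ContDiff ℝ (⊤ : ℕ∞) f) (hf0 : ∀ q, f q ≠ 0)
    (heq : ∀ (z v : Phase n),
      Omega (Xt z) v - B.form z (Xt z) v - Ξt.form z (Xt z) v = fderiv ℝ Ht z v) :
    (∀ (z v : Phase n),
        Omega (ChapRescale f Xt z) v = fderiv ℝ (fun w => Ht (PsiInv f w)) z v)
      ↔ (∀ (z v : Phase n),
          dfTheta f z (ChapRescale f Xt z) v
            - (f z.1) ^ 2 * (B.form z (ChapRescale f Xt z) v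
                + pullTwoForm f Ξt.form z (ChapRescale f Xt z) v) = 0) := by
  have hfdiff : ∀ x : Vec n, HasFDerivAt f (fderiv ℝ f x) x := fun x =>
    ((hf.differentiable (by simp)) x).hasFDerivAt
  have key : ∀ (z v : Phase n),
      Omega (ChapRescale f Xt z) v - fderiv ℝ (fun w => Ht (PsiInv f w)) z v
        = -(f z.1)⁻¹ * (dfTheta f z (ChapRescale f Xt z) v
            - (f z.1) ^ 2 * (B.form z (ChapRescale f Xt z) v
                + pullTwoForm f Ξt.form z (ChapRescale f Xt z) v)) := by
    rintro ⟨q, p⟩ v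
    set F := f q with hF
    have hF0 : F ≠ 0 := hf0 q
    set w : Phase n := PsiInv f (q, p) with hw
    have hw1 : w.1 = q := rfl
    set g : Vec n →L[ℝ] ℝ := fderiv ℝ f q with hg
    set a : Vec n := (Xt w).1 with ha
    set b : Vec n := (Xt w).2 with hb
    -- derivative of 1/f at q
    have hinv : HasFDerivAt (fun y => (f y)⁻¹)
        ((-ContinuousLinearMap.mulLeftRight ℝ ℝ F⁻¹ F⁻¹).comp g) q :=
      (hasFDerivAt_inv' hF0).comp q (hfdiff q)
    -- formula for the rescaled field
    have hXC : ChapRescale f Xt (q, p)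
        = (F⁻¹ • a, b + (F⁻¹ * (F⁻¹ * g a)) • p) := by
      show fderiv ℝ (Psi f) w (F⁻¹ • Xt w) = _
      rw [psi_fderiv_apply (hfdiff w.1)]
      refine Prod.ext rfl ?_
      show F • (F⁻¹ • b) + (fderiv ℝ f w.1) (F⁻¹ • a) • (F⁻¹ • p) = _
      have hwg : fderiv ℝ f w.1 = g := rfl
      rw [hwg, _root_.map_smul, smul_eq_mul]
      match_scalars <;> field_simp <;> ring
    -- formula for the derivative of PsiInv
    have hUV : ∀ u : Phase n, fderiv ℝ (PsiInv f) (q, p) u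
        = (u.1, F⁻¹ • u.2 + (-(F⁻¹ * g u.1 * F⁻¹)) • p) := by
      intro u
      show fderiv ℝ (Psi fun y => (f y)⁻¹) (q, p) u = _
      rw [psi_fderiv_apply (f' := (-ContinuousLinearMap.mulLeftRight ℝ ℝ F⁻¹ F⁻¹).comp g) hinv]
      simp
      rfl
    set uv : Phase n := fderiv ℝ (PsiInv f) (q, p) v with huv
    -- chain rule
    obtain ⟨L, hL⟩ : ∃ L, HasFDerivAt (PsiInv f) L (q, p) := ⟨_, psi_hasFDerivAt hinv⟩
    have hHtw : HasFDerivAt Ht (fderiv ℝ Ht w) w :=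
      ((hHt.differentiable (by simp)) w).hasFDerivAt
    have hcomp : fderiv ℝ (fun y => Ht (PsiInv f y)) (q, p) v = fderiv ℝ Ht w uv := by
      show fderiv ℝ (Ht ∘ PsiInv f) (q, p) v = _
      rw [(hHtw.comp (q, p) hL).fderiv, ContinuousLinearMap.comp_apply, huv, hL.fderiv]
    -- the Hamiltonian equation at w applied to uv
    have hHeq : fderiv ℝ Ht w uv
        = Omega (Xt w) uv - B.form w (Xt w) uv - Ξt.form w (Xt w) uv := (heq w uv).symm
    -- basic form manipulations
    have hXC1 : (ChapRescale f Xt (q, p)).1 = F⁻¹ • a := by rw [hXC]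
    have hB1 : B.form (q, p) (ChapRescale f Xt (q, p)) v
        = F⁻¹ * B.form (q, p) (Xt w) v := by
      rw [B.semibasic (q, p) (ChapRescale f Xt (q, p)) v (F⁻¹ • Xt w) v
        (by rw [hXC1]; rfl) rfl, B.smul_left]
    have hB2 : B.form w (Xt w) uv = B.form (q, p) (Xt w) v := by
      rw [B.semibasic w (Xt w) uv (Xt w) v rfl (by rw [huv, hUV v])]
      show B.form (q, F⁻¹ • p) _ _ = _
      rw [B.basic q (F⁻¹ • p) p]
    have hXi : Ξt.form w (Xt w) uv
        = F * pullTwoForm f Ξt.form (q, p) (ChapRescale f Xt (q, p)) v := by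
      unfold pullTwoForm
      rw [Ξt.semibasic w (fderiv ℝ (PsiInv f) (q, p) (ChapRescale f Xt (q, p)))
        (fderiv ℝ (PsiInv f) (q, p) v) (F⁻¹ • Xt w) uv
        (by rw [hUV (ChapRescale f Xt (q, p)), hXC1]; rfl) (by rw [huv]),
        Ξt.smul_left]
      field_simp
    -- put everything together
    rw [hcomp, hHeq, hB2, hXi, hB1]
    have hUVv := hUV v
    rw [← huv] at hUVv
    unfold Omega dfTheta
    rw [hXC, hUVv]
    simp only [_root_.map_smul, smul_eq_mul, add_dotProduct, dotProduct_add, smul_dotProduct,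
      dotProduct_smul, neg_mul, neg_smul, neg_dotProduct, dotProduct_neg]
    rw [show p ⬝ᵥ a = a ⬝ᵥ p from dotProduct_comm p a]
    field_simp
    ring
  constructor
  · intro h z v
    have hk := key z v
    rw [h z v, sub_self] at hk
    have := hk.symm
    rcases mul_eq_zero.mp this with h1 | h2
    · exact absurd (neg_eq_zero.mp h1) (inv_ne_zero (hf0 z.1))
    · exact h2
  · intro h z v
    have hk := key z v
    rw [h z v, mul_zero, sub_eq_zero] at hk
    exact hk
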